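/- arXiv:2112.05353 — 2 statements merged into one kernel-verified Lean document; each statement's English description precedes it below -/
import Mathlib

section
/- Let (V, d) be a finite metric space and let T ⊆ V be a finite set of terminals with |T| ≥ 1. The total cost of a minimum spanning tree of the complete graph on T (with edge weights given by d) is at most twice the cost of an optimal Steiner tree for T, i.e., at most twice the minimum, over all finite trees in the metric completion whose vertex set contains T, of the total edge length. -/
open SimpleGraph List

section KMB
variable {V : Type*} [MetricSpace V]

/-- cost of a walk along a list of vertices -/
noncomputable def pc : List V → ℝ
  | [] => 0
  | [_] => 0
  | a :: b :: l => dist a b + pc (b :: l)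

/-- edges of a walk along a list of vertices -/
def pe : List V → List (Sym2 V)
  | [] => []
  | [_] => []
  | a :: b :: l => s(a, b) :: pe (b :: l)

lemma pc_nonneg : ∀ l : List V, 0 ≤ pc l
  | [] => le_refl _
  | [_] => le_refl _
  | a :: b :: l => by
      have := pc_nonneg (b :: l)
      have := dist_nonneg (x := a) (y := b)
      simp only [pc]; linarith

lemma pc_cons_le (a : V) (l : List V) : pc l ≤ pc (a :: l) := by
  cases l with
  | nil => simp [pc]
  | cons b t => simp only [pc]; have := dist_nonneg (x := a) (y := b); linarith

lemma pc_le_cons_cons (a b : V) (l : List V) : pc (a :: l) ≤ dist a b + pc (b :: l) := by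
  cases l with
  | nil => simp [pc, dist_nonneg]
  | cons c t =>
      simp only [pc]
      have := dist_triangle a b c
      linarith

lemma pc_cons_sublist {l₁ l₂ : List V} (h : l₁ <+ l₂) :
    ∀ a : V, pc (a :: l₁) ≤ pc (a :: l₂) := by
  induction h with
  | slnil => intro a; exact le_refl _
  | cons b h ih =>
      intro a
      exact le_trans (ih a) (pc_le_cons_cons a b _)
  | cons_cons x h ih =>
      intro a
      rw [pc, pc]
      exact add_le_add (le_refl _) (ih x)

lemma pc_sublist {l₁ l₂ : List V} (h : l₁ <+ l₂) : pc l₁ ≤ pc l₂ := by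
  induction h with
  | slnil => exact le_refl _
  | cons b h ih => exact le_trans ih (pc_cons_le b _)
  | cons_cons x h ih => exact pc_cons_sublist ‹_› x

lemma pc_append_cons : ∀ (s : List V) (a : V) (t : List V),
    pc (s ++ a :: t) = pc (s ++ [a]) + pc (a :: t)
  | [], a, t => by simp [pc]
  | [c], a, t => by simp [pc]
  | c :: d :: s, a, t => by
      have ih := pc_append_cons (d :: s) a t
      simp only [List.cons_append, pc, List.append_eq] at ih ⊢
      linarith

lemma pc_cons_head {m : List V} {c : V} (h : m.head? = some c) (a : V) :
    pc (a :: m) = dist a c + pc m := by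
  cases m with
  | nil => simp at h
  | cons b t => simp only [List.head?_cons, Option.some.injEq] at h; subst h; rfl

lemma pe_mem_mem : ∀ (l : List V) (e : Sym2 V), e ∈ pe l → ∀ x ∈ e, x ∈ l
  | [], e, he => by simp [pe] at he
  | [_], e, he => by simp [pe] at he
  | a :: b :: t, e, he => by
      intro x hx
      rcases List.mem_cons.mp he with rfl | he'
      · rcases Sym2.mem_iff.mp hx with rfl | rfl
        · exact List.mem_cons_self
        · exact List.mem_cons_of_mem _ (List.mem_cons_self)
      · exact List.mem_cons_of_mem _ (pe_mem_mem (b :: t) e he' x hx)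

lemma lift_dist_nonneg (e : Sym2 V) : 0 ≤ Sym2.lift ⟨dist, dist_comm⟩ e := by
  induction e using Sym2.ind with
  | _ a b => simp [dist_nonneg]

lemma sum_pe_le [DecidableEq (Sym2 V)] : ∀ l : List V,
    ∑ f ∈ (pe l).toFinset, Sym2.lift ⟨dist, dist_comm⟩ f ≤ pc l
  | [] => by simp [pe, pc]
  | [_] => by simp [pe, pc]
  | a :: b :: t => by
      have ih := sum_pe_le (b :: t)
      simp only [pe, List.toFinset_cons, pc]
      by_cases hmem : s(a, b) ∈ (pe (b :: t)).toFinset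
      · rw [Finset.insert_eq_self.mpr hmem]
        have := dist_nonneg (x := a) (y := b)
        linarith
      · rw [Finset.sum_insert hmem, Sym2.lift_mk]
        linarith

lemma reach_pe_head [DecidableEq (Sym2 V)] : ∀ (t : List V) (a x : V), x ∈ a :: t →
    (SimpleGraph.fromEdgeSet ((pe (a :: t)).toFinset : Set (Sym2 V))).Reachable a x := by
  classical
  intro t
  induction t with
  | nil => intro a x hx; simp at hx; subst hx; exact Reachable.refl _
  | cons b t ih =>
      intro a x hx
      rcases List.mem_cons.mp hx with rfl | hx'
      · exact Reachable.refl _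
      · have hmono : (SimpleGraph.fromEdgeSet ((pe (b :: t)).toFinset : Set (Sym2 V))) ≤
            (SimpleGraph.fromEdgeSet ((pe (a :: b :: t)).toFinset : Set (Sym2 V))) := by
          apply SimpleGraph.fromEdgeSet_mono
          intro f hf
          simp only [Finset.coe_insert, List.coe_toFinset, Set.mem_setOf_eq] at *
          show f ∈ pe (a :: b :: t)
          simp only [pe]
          exact List.mem_cons_of_mem _ hf
        have hbx := (ih b x hx').mono hmono
        have hab : (SimpleGraph.fromEdgeSet ((pe (a :: b :: t)).toFinset : Set (Sym2 V))).Reachable a b := by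
          by_cases hne : a = b
          · subst hne; exact Reachable.refl _
          · refine Adj.reachable ?_
            rw [SimpleGraph.fromEdgeSet_adj]
            refine ⟨?_, hne⟩
            simp [pe]
        exact hab.trans hbx

end KMB


section G
variable {V : Type*}

lemma acyclic_mono {G H : SimpleGraph V} (hle : H ≤ G) (h : G.IsAcyclic) : H.IsAcyclic :=
  fun _ c hc => h (c.mapLe hle) (hc.mapLe hle)

lemma fromEdgeSet_erase [DecidableEq (Sym2 V)] (E : Finset (Sym2 V)) (e : Sym2 V) :
    SimpleGraph.fromEdgeSet (↑(E.erase e) : Set (Sym2 V)) =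
      SimpleGraph.fromEdgeSet (↑E : Set (Sym2 V)) \ SimpleGraph.fromEdgeSet {e} := by
  ext x y
  simp only [fromEdgeSet_adj, Finset.coe_erase, Set.mem_diff, Finset.mem_coe,
    SimpleGraph.sdiff_adj, Set.mem_singleton_iff]
  tauto

lemma fromEdgeSet_erase_diag [DecidableEq (Sym2 V)] (E : Finset (Sym2 V)) (u : V) :
    SimpleGraph.fromEdgeSet (↑(E.erase s(u, u)) : Set (Sym2 V)) =
      SimpleGraph.fromEdgeSet (↑E : Set (Sym2 V)) := by
  ext x y
  simp only [fromEdgeSet_adj, Finset.coe_erase, Set.mem_diff, Finset.mem_coe,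
    Set.mem_singleton_iff]
  constructor
  · rintro ⟨⟨h1, _⟩, h2⟩; exact ⟨h1, h2⟩
  · rintro ⟨h1, h2⟩
    refine ⟨⟨h1, fun hc => h2 ?_⟩, h2⟩
    rcases Sym2.eq_iff.mp hc with ⟨rfl, rfl⟩ | ⟨rfl, rfl⟩ <;> rfl

/-- if `x` reaches `s` in `G` then either it still does after deleting edge `e`, or
the path crosses `e` in a definite orientation. -/
lemma cross_aux {G : SimpleGraph V} {e : Sym2 V} :
    ∀ {x s : V} (w : G.Walk x s), w.IsTrail →
      (G \ SimpleGraph.fromEdgeSet {e}).Reachable x s ∨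
        ∃ a b, s(a, b) = e ∧ (G \ SimpleGraph.fromEdgeSet {e}).Reachable x a ∧
          (G \ SimpleGraph.fromEdgeSet {e}).Reachable b s := by
  intro x s w
  induction w with
  | nil => exact fun _ => Or.inl (Reachable.refl _)
  | @cons u v s h p ih =>
      intro ht
      have htp : p.IsTrail := ht.of_cons
      by_cases hee : s(u, v) = e
      · refine Or.inr ⟨u, v, hee, Reachable.refl _, ?_⟩
        have hnot : e ∉ p.edges := by
          have := ht.edges_nodup
          rw [SimpleGraph.Walk.edges_cons] at this
          exact hee ▸ (List.nodup_cons.mp this).1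
        refine ⟨p.transfer _ ?_⟩
        intro f hf
        rw [SimpleGraph.edgeSet_sdiff, SimpleGraph.edgeSet_fromEdgeSet]
        refine ⟨p.edges_subset_edgeSet hf, ?_⟩
        rintro ⟨hf1, -⟩
        rw [Set.mem_singleton_iff] at hf1
        exact hnot (hf1 ▸ hf)
      · have hadj : (G \ SimpleGraph.fromEdgeSet {e}).Adj u v := by
          rw [SimpleGraph.sdiff_adj]
          refine ⟨h, ?_⟩
          rw [SimpleGraph.fromEdgeSet_adj]
          rintro ⟨h1, -⟩
          exact hee (Set.mem_singleton_iff.mp h1)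
        rcases ih htp with hr | ⟨a, b, hab, h1, h2⟩
        · exact Or.inl (hadj.reachable.trans hr)
        · exact Or.inr ⟨a, b, hab, hadj.reachable.trans h1, h2⟩

lemma cross {G : SimpleGraph V} {e : Sym2 V} {x s : V} (h : G.Reachable x s) :
    (G \ SimpleGraph.fromEdgeSet {e}).Reachable x s ∨
      ∃ a b, s(a, b) = e ∧ (G \ SimpleGraph.fromEdgeSet {e}).Reachable x a ∧
        (G \ SimpleGraph.fromEdgeSet {e}).Reachable b s := by
  classical
  obtain ⟨w⟩ := h
  exact cross_aux w.toPath.val w.toPath.prop.isTrail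

lemma reach_del_aux {G : SimpleGraph V} {a b : V}
    (hab : (G \ SimpleGraph.fromEdgeSet {s(a, b)}).Reachable a b) :
    ∀ {u v : V}, G.Walk u v → (G \ SimpleGraph.fromEdgeSet {s(a, b)}).Reachable u v := by
  intro u v w
  induction w with
  | nil => exact Reachable.refl _
  | @cons u v s h p ih =>
      by_cases hee : s(u, v) = s(a, b)
      · rcases Sym2.eq_iff.mp hee with ⟨rfl, rfl⟩ | ⟨rfl, rfl⟩
        · exact hab.trans ih
        · exact hab.symm.trans ih
      · have hadj : (G \ SimpleGraph.fromEdgeSet {s(a, b)}).Adj u v := by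
          rw [SimpleGraph.sdiff_adj]
          refine ⟨h, ?_⟩
          rw [SimpleGraph.fromEdgeSet_adj]
          rintro ⟨h1, -⟩
          exact hee (Set.mem_singleton_iff.mp h1)
        exact hadj.reachable.trans ih

/-- prune an edge set connecting `T` down to an acyclic one still connecting `T`. -/
lemma acyclify [DecidableEq (Sym2 V)] :
    ∀ (n : ℕ) (E : Finset (Sym2 V)), E.card ≤ n → ∀ (T : Finset V),
      (∀ u ∈ T, ∀ v ∈ T, (SimpleGraph.fromEdgeSet (↑E : Set (Sym2 V))).Reachable u v) →
      ∃ E' : Finset (Sym2 V), E' ⊆ E ∧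
        (∀ u ∈ T, ∀ v ∈ T, (SimpleGraph.fromEdgeSet (↑E' : Set (Sym2 V))).Reachable u v) ∧
        (SimpleGraph.fromEdgeSet (↑E' : Set (Sym2 V))).IsAcyclic := by
  intro n
  induction n with
  | zero =>
      intro E hcard T hconn
      have hE : E = ∅ := Finset.card_eq_zero.mp (Nat.le_zero.mp hcard)
      subst hE
      refine ⟨∅, Finset.Subset.refl _, hconn, ?_⟩
      simp only [Finset.coe_empty, SimpleGraph.fromEdgeSet_empty]
      exact isAcyclic_bot
  | succ n ih =>
      intro E hcard T hconn
      by_cases hacyc : (SimpleGraph.fromEdgeSet (↑E : Set (Sym2 V))).IsAcyclic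
      · exact ⟨E, Finset.Subset.refl _, hconn, hacyc⟩
      · rw [SimpleGraph.IsAcyclic] at hacyc
        push_neg at hacyc
        obtain ⟨z, c, hc⟩ := hacyc
        cases c with
        | nil => exact absurd hc (SimpleGraph.Walk.IsCycle.not_of_nil)
        | @cons _ y _ hzy p =>
            have he : s(z, y) ∈ (SimpleGraph.Walk.cons hzy p).edges := by
              rw [SimpleGraph.Walk.edges_cons]; exact List.mem_cons_self
            have hadjreach := SimpleGraph.adj_and_reachable_delete_edges_iff_exists_cycle.mpr
              ⟨z, SimpleGraph.Walk.cons hzy p, hc, he⟩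
            have hzE : s(z, y) ∈ E := by
              have := hadjreach.1
              rw [SimpleGraph.fromEdgeSet_adj] at this
              exact this.1
            have hcard' : (E.erase s(z, y)).card ≤ n := by
              have h1 := Finset.card_erase_of_mem hzE
              have h2 : 1 ≤ E.card := Finset.card_pos.mpr ⟨_, hzE⟩
              omega
            have hconn' : ∀ u ∈ T, ∀ v ∈ T,
                (SimpleGraph.fromEdgeSet (↑(E.erase s(z, y)) : Set (Sym2 V))).Reachable u v := by
              intro u hu v hv
              rw [fromEdgeSet_erase]
              obtain ⟨w⟩ := hconn u hu v hv
              exact reach_del_aux hadjreach.2 w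
            obtain ⟨E', hsub, hconn'', hacyc''⟩ := ih (E.erase s(z, y)) hcard' T hconn'
            exact ⟨E', hsub.trans (Finset.erase_subset _ _), hconn'', hacyc''⟩
end G


section KMB2
variable {V : Type*} [MetricSpace V]

lemma reach_of_mem_support {G : SimpleGraph V} {x s y : V} (w : G.Walk x s)
    (hy : y ∈ w.support) : G.Reachable x y := by
  classical
  exact ⟨w.takeUntil y hy⟩

lemma head?_append_cons (s : List V) (a : V) (t₁ t₂ : List V) :
    (s ++ a :: t₁).head? = (s ++ a :: t₂).head? := by
  cases s <;> simp

lemma key [DecidableEq (Sym2 V)] :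
    ∀ (n : ℕ) (E : Finset (Sym2 V)), E.card ≤ n →
      (SimpleGraph.fromEdgeSet (↑E : Set (Sym2 V))).IsAcyclic →
      ∀ (S : Set V) (x : V),
        (∀ s ∈ S, (SimpleGraph.fromEdgeSet (↑E : Set (Sym2 V))).Reachable x s) →
        ∃ l : List V, l.head? = some x ∧ l.getLast? = some x ∧ (∀ s ∈ S, s ∈ l) ∧
          pc l ≤ 2 * ∑ e ∈ E, Sym2.lift ⟨dist, dist_comm⟩ e := by
  intro n
  induction n with
  | zero =>
      intro E hcard _ S x hre
      have hE : E = ∅ := Finset.card_eq_zero.mp (Nat.le_zero.mp hcard)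
      subst hE
      refine ⟨[x], rfl, rfl, ?_, by simp [pc]⟩
      intro s hs
      have := hre s hs
      rw [Finset.coe_empty, SimpleGraph.fromEdgeSet_empty, SimpleGraph.reachable_bot] at this
      simp [← this]
  | succ n ih =>
      intro E hcard hacyc S x hre
      rcases Finset.eq_empty_or_nonempty E with hE | hne
      · subst hE
        refine ⟨[x], rfl, rfl, ?_, by simp [pc]⟩
        intro s hs
        have := hre s hs
        rw [Finset.coe_empty, SimpleGraph.fromEdgeSet_empty, SimpleGraph.reachable_bot] at this
        simp [← this]
      · obtain ⟨e, he⟩ := hne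
        have hcard1 : 1 ≤ E.card := Finset.card_pos.mpr ⟨_, he⟩
        revert he
        induction e using Sym2.ind with
        | _ u v =>
        intro he
        have hcarde : (E.erase s(u, v)).card ≤ n := by
          have := Finset.card_erase_of_mem he
          omega
        have hsum : ∑ f ∈ E.erase s(u, v), Sym2.lift ⟨dist, dist_comm⟩ f + dist u v
            = ∑ f ∈ E, Sym2.lift ⟨dist, dist_comm⟩ f := by
          have := Finset.sum_erase_add E (Sym2.lift ⟨dist, dist_comm⟩) he
          simpa using this
        by_cases huv : u = v
        · -- diagonal edge: drop it
          subst huv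
          have hGeq := fromEdgeSet_erase_diag E u
          obtain ⟨l, h1, h2, h3, h4⟩ := ih (E.erase s(u, u)) hcarde (hGeq ▸ hacyc) S x
            (fun s hs => hGeq ▸ hre s hs)
          refine ⟨l, h1, h2, h3, ?_⟩
          have hd : dist u u = (0:ℝ) := dist_self u
          linarith [h4, hsum, hd]
        · -- non-diagonal edge
          set G := SimpleGraph.fromEdgeSet (↑E : Set (Sym2 V)) with hGdef
          set G' := SimpleGraph.fromEdgeSet (↑(E.erase s(u, v)) : Set (Sym2 V)) with hG'def
          have hG'eq : G' = G \ SimpleGraph.fromEdgeSet {s(u, v)} := fromEdgeSet_erase E _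
          have hG'le : G' ≤ G := by
            apply SimpleGraph.fromEdgeSet_mono
            exact_mod_cast Finset.erase_subset _ _
          have hacyc' : G'.IsAcyclic := acyclic_mono hG'le hacyc
          have hadj : G.Adj u v := by rw [SimpleGraph.fromEdgeSet_adj]; exact ⟨he, huv⟩
          have hbridge : ¬ G'.Reachable u v := by
            rw [hG'eq]
            exact (SimpleGraph.isAcyclic_iff_forall_adj_isBridge.mp hacyc hadj : _)
          by_cases hSo : ∀ s ∈ S, G'.Reachable x s
          · -- everything on x's side: drop the edge
            obtain ⟨l, h1, h2, h3, h4⟩ := ih (E.erase s(u, v)) hcarde hacyc' S x hSo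
            refine ⟨l, h1, h2, h3, ?_⟩
            have hd : (0:ℝ) ≤ dist u v := dist_nonneg
            linarith [h4, hsum]
          · push_neg at hSo
            obtain ⟨s₀, hs₀S, hs₀⟩ := hSo
            have hcross₀ := cross (e := s(u, v)) (hre s₀ hs₀S)
            rw [← hG'eq] at hcross₀
            rcases hcross₀ with h | ⟨a, b, hab, hxa, hbs₀⟩
            · exact absurd h hs₀
            have habE : s(a, b) ∈ E := hab ▸ he
            have hdab : dist a b = dist u v := by
              rcases Sym2.eq_iff.mp hab with ⟨rfl, rfl⟩ | ⟨rfl, rfl⟩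
              · rfl
              · exact dist_comm _ _
            have hne_ab : a ≠ b := by
              rintro rfl
              rcases Sym2.eq_iff.mp hab with ⟨rfl, rfl⟩ | ⟨rfl, rfl⟩ <;> exact huv rfl
            have hnab : ¬ G'.Reachable a b := by
              intro h
              rcases Sym2.eq_iff.mp hab with ⟨rfl, rfl⟩ | ⟨rfl, rfl⟩
              · exact hbridge h
              · exact hbridge h.symm
            have hxb : ¬ G'.Reachable x b := fun h => hnab (hxa.symm.trans h)
            have hbs : ∀ s ∈ S, ¬ G'.Reachable x s → G'.Reachable b s := by
              intro s hsS hxs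
              have hcr := cross (e := s(u, v)) (hre s hsS)
              rw [← hG'eq] at hcr
              rcases hcr with h | ⟨a', b', hab', h1, h2⟩
              · exact absurd h hxs
              · have : s(a', b') = s(a, b) := hab'.trans hab.symm
                rcases Sym2.eq_iff.mp this with ⟨rfl, rfl⟩ | ⟨rfl, rfl⟩
                · exact h2
                · exact absurd (hxa.symm.trans h1) hnab
            classical
            set P : Sym2 V → Prop := fun f => ∀ y ∈ f, G'.Reachable x y with hPdef
            set E₁ := (E.erase s(u, v)).filter P with hE₁def
            set E₂ := (E.erase s(u, v)).filter (fun f => ¬ P f) with hE₂def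
            have hE₁sub : E₁ ⊆ E.erase s(u, v) := Finset.filter_subset _ _
            have hE₂sub : E₂ ⊆ E.erase s(u, v) := Finset.filter_subset _ _
            have hcard₁ : E₁.card ≤ n := le_trans (Finset.card_le_card hE₁sub) hcarde
            have hcard₂ : E₂.card ≤ n := le_trans (Finset.card_le_card hE₂sub) hcarde
            have hle₁ : SimpleGraph.fromEdgeSet (↑E₁ : Set (Sym2 V)) ≤ G' :=
              SimpleGraph.fromEdgeSet_mono (by exact_mod_cast hE₁sub)
            have hle₂ : SimpleGraph.fromEdgeSet (↑E₂ : Set (Sym2 V)) ≤ G' :=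
              SimpleGraph.fromEdgeSet_mono (by exact_mod_cast hE₂sub)
            have hacyc₁ := acyclic_mono hle₁ hacyc'
            have hacyc₂ := acyclic_mono hle₂ hacyc'
            have htrans₁ : ∀ s, G'.Reachable x s →
                (SimpleGraph.fromEdgeSet (↑E₁ : Set (Sym2 V))).Reachable x s := by
              intro s hr
              obtain ⟨w⟩ := hr
              refine ⟨w.transfer _ ?_⟩
              intro f hf
              have hfG' := w.edges_subset_edgeSet hf
              rw [hG'def, SimpleGraph.edgeSet_fromEdgeSet] at hfG'
              rw [SimpleGraph.edgeSet_fromEdgeSet]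
              refine ⟨?_, hfG'.2⟩
              rw [Finset.mem_coe, hE₁def, Finset.mem_filter]
              refine ⟨Finset.mem_coe.mp hfG'.1, ?_⟩
              intro y hy
              obtain ⟨z, rfl⟩ := Sym2.mem_iff_exists.mp hy
              have hsup : y ∈ w.support := w.fst_mem_support_of_mem_edges hf
              exact reach_of_mem_support w hsup
            have htrans₂ : ∀ s, G'.Reachable b s →
                (SimpleGraph.fromEdgeSet (↑E₂ : Set (Sym2 V))).Reachable b s := by
              intro s hr
              obtain ⟨w⟩ := hr
              refine ⟨w.transfer _ ?_⟩
              intro f hf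
              have hfG' := w.edges_subset_edgeSet hf
              rw [hG'def, SimpleGraph.edgeSet_fromEdgeSet] at hfG'
              rw [SimpleGraph.edgeSet_fromEdgeSet]
              refine ⟨?_, hfG'.2⟩
              rw [Finset.mem_coe, hE₂def, Finset.mem_filter]
              refine ⟨Finset.mem_coe.mp hfG'.1, ?_⟩
              revert hf
              refine Sym2.ind (fun c d hf => ?_) f
              intro hP
              have hyc : c ∈ s(c, d) := Sym2.mem_mk_left c d
              have hsup : c ∈ w.support := w.fst_mem_support_of_mem_edges hf
              have hbc : G'.Reachable b c := reach_of_mem_support w hsup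
              have hxc : G'.Reachable x c := hP c hyc
              exact hxb (hxc.trans hbc.symm)
            obtain ⟨l₁, h₁h, h₁l, h₁m, h₁c⟩ := ih E₁ hcard₁ hacyc₁
              (insert a {s ∈ S | G'.Reachable x s}) x
              (by
                rintro s hs
                rcases Set.mem_insert_iff.mp hs with rfl | ⟨hsS, hrs⟩
                · exact htrans₁ s hxa
                · exact htrans₁ s hrs)
            obtain ⟨l₂, h₂h, h₂l, h₂m, h₂c⟩ := ih E₂ hcard₂ hacyc₂
              {s ∈ S | ¬ G'.Reachable x s} b
              (fun s hs => htrans₂ s (hbs s hs.1 hs.2))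
            obtain ⟨sl, tl, hl₁⟩ := List.append_of_mem (h₁m a (Set.mem_insert _ _))
            obtain ⟨pl, hl₂⟩ := List.getLast?_eq_some_iff.mp h₂l
            refine ⟨sl ++ a :: (pl ++ b :: (a :: tl)), ?_, ?_, ?_, ?_⟩
            · rw [head?_append_cons sl a _ tl, ← hl₁, h₁h]
            · have : sl ++ a :: (pl ++ b :: (a :: tl)) =
                  (sl ++ a :: (pl ++ [b])) ++ (a :: tl) := by simp
              rw [this, List.getLast?_append_cons, ← List.getLast?_append_cons sl a tl, ← hl₁, h₁l]
            · intro s hs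
              by_cases hrs : G'.Reachable x s
              · have : s ∈ l₁ := h₁m s (Set.mem_insert_iff.mpr (Or.inr ⟨hs, hrs⟩))
                rw [hl₁] at this
                simp only [List.mem_append, List.mem_cons] at this ⊢
                tauto
              · have : s ∈ l₂ := h₂m s ⟨hs, hrs⟩
                rw [hl₂] at this
                simp only [List.mem_append, List.mem_cons] at this ⊢
                tauto
            · have e1 : pc (sl ++ a :: (pl ++ b :: (a :: tl)))
                  = pc (sl ++ [a]) + pc (a :: (pl ++ b :: (a :: tl))) :=
                pc_append_cons sl a _
              have e2 : pc (a :: (pl ++ b :: (a :: tl)))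
                  = pc ((a :: pl) ++ [b]) + pc (b :: (a :: tl)) := by
                have := pc_append_cons (a :: pl) b (a :: tl)
                simpa using this
              have e3 : pc (b :: (a :: tl)) = dist b a + pc (a :: tl) := rfl
              have e4 : pc ((a :: pl) ++ [b]) = dist a b + pc (pl ++ [b]) := by
                have hhd : (pl ++ [b]).head? = some b := by rw [← hl₂]; exact h₂h
                have := pc_cons_head hhd a
                simpa using this
              have h₁c' := h₁c
              rw [hl₁, pc_append_cons sl a tl] at h₁c'
              have h₂c' := h₂c
              rw [hl₂] at h₂c'
              have hsplit : ∑ f ∈ E₁, Sym2.lift ⟨dist, dist_comm⟩ f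
                  + ∑ f ∈ E₂, Sym2.lift ⟨dist, dist_comm⟩ f
                  = ∑ f ∈ E.erase s(u, v), Sym2.lift ⟨dist, dist_comm⟩ f := by
                rw [hE₁def, hE₂def]
                exact Finset.sum_filter_add_sum_filter_not _ _ _
              rw [e1, e2, e3, e4]
              have hba : dist b a = dist a b := dist_comm b a
              rw [← hsum, ← hsplit, ← hdab]
              linarith [h₁c', h₂c']

end KMB2


/-- Kou–Markowsky–Berman 2-approximation: in a finite metric space, the cost of a minimum
spanning tree of the complete graph on the terminal set `T` (with edge weights given by the
metric) is at most twice the cost of any Steiner tree for `T`, i.e. of any tree in the metric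
completion whose vertex set contains `T`. -/
theorem mst_le_two_mul_steiner {V : Type*} [MetricSpace V] [Fintype V]
    (T : Finset V) (hT : T.Nonempty)
    (Emst : Finset (Sym2 V))
    -- `Emst` is a spanning tree of the complete graph on `T`:
    (hmst_sub : ∀ e ∈ Emst, ∀ x ∈ e, x ∈ T)
    (hmst_conn : ∀ u ∈ T, ∀ v ∈ T,
      (SimpleGraph.fromEdgeSet (↑Emst : Set (Sym2 V))).Reachable u v)
    (hmst_acyc : (SimpleGraph.fromEdgeSet (↑Emst : Set (Sym2 V))).IsAcyclic)
    -- it is a *minimum* spanning tree on `T`: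
    (hmst_min : ∀ E' : Finset (Sym2 V), (∀ e ∈ E', ∀ x ∈ e, x ∈ T) →
      (∀ u ∈ T, ∀ v ∈ T, (SimpleGraph.fromEdgeSet (↑E' : Set (Sym2 V))).Reachable u v) →
      (SimpleGraph.fromEdgeSet (↑E' : Set (Sym2 V))).IsAcyclic →
      ∑ e ∈ Emst, Sym2.lift ⟨dist, dist_comm⟩ e ≤ ∑ e ∈ E', Sym2.lift ⟨dist, dist_comm⟩ e)
    -- `Eopt` is any Steiner tree for `T` (a tree whose vertices may include Steiner points):
    (Eopt : Finset (Sym2 V))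
    (hopt_conn : ∀ u ∈ T, ∀ v ∈ T,
      (SimpleGraph.fromEdgeSet (↑Eopt : Set (Sym2 V))).Reachable u v)
    (hopt_acyc : (SimpleGraph.fromEdgeSet (↑Eopt : Set (Sym2 V))).IsAcyclic) :
    ∑ e ∈ Emst, Sym2.lift ⟨dist, dist_comm⟩ e
      ≤ 2 * ∑ e ∈ Eopt, Sym2.lift ⟨dist, dist_comm⟩ e := by
  classical
  obtain ⟨t₀, ht₀⟩ := hT
  obtain ⟨l, hlh, hll, hlm, hlc⟩ := key Eopt.card Eopt le_rfl hopt_acyc (↑T : Set V) t₀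
    (fun s hs => hopt_conn t₀ ht₀ s hs)
  set l'' : List V := l.filter (fun y => y ∈ T) with hl''def
  have hsubl : l'' <+ l := List.filter_sublist
  have hcost'' : pc l'' ≤ pc l := pc_sublist hsubl
  have hTl : ∀ s ∈ T, s ∈ l'' := by
    intro s hs
    rw [hl''def, List.mem_filter]
    exact ⟨hlm s hs, by simpa using hs⟩
  have hl''T : ∀ y ∈ l'', y ∈ T := by
    intro y hy
    rw [hl''def, List.mem_filter] at hy
    simpa using hy.2
  set E₀ : Finset (Sym2 V) := (pe l'').toFinset with hE₀def
  have hsub₀ : ∀ e ∈ E₀, ∀ x ∈ e, x ∈ T := by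
    intro e heE x hx
    rw [hE₀def, List.mem_toFinset] at heE
    exact hl''T x (pe_mem_mem l'' e heE x hx)
  have hconn₀ : ∀ u ∈ T, ∀ v ∈ T,
      (SimpleGraph.fromEdgeSet (↑E₀ : Set (Sym2 V))).Reachable u v := by
    intro u hu v hv
    have hul : u ∈ l'' := hTl u hu
    have hvl : v ∈ l'' := hTl v hv
    rw [hE₀def]
    cases hl'' : l'' with
    | nil => rw [hl''] at hul; simp at hul
    | cons c t =>
        rw [hl''] at hul hvl
        exact ((reach_pe_head t c u hul).symm.trans (reach_pe_head t c v hvl))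
  have hcost₀ : ∑ e ∈ E₀, Sym2.lift ⟨dist, dist_comm⟩ e
      ≤ 2 * ∑ e ∈ Eopt, Sym2.lift ⟨dist, dist_comm⟩ e := by
    have := sum_pe_le l''
    rw [← hE₀def] at this
    linarith
  obtain ⟨E', hsubE', hconn', hacyc'⟩ := acyclify E₀.card E₀ le_rfl T hconn₀
  have hsub' : ∀ e ∈ E', ∀ x ∈ e, x ∈ T := fun e he => hsub₀ e (hsubE' he)
  have hcost' : ∑ e ∈ E', Sym2.lift ⟨dist, dist_comm⟩ e
      ≤ ∑ e ∈ E₀, Sym2.lift ⟨dist, dist_comm⟩ e :=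
    Finset.sum_le_sum_of_subset_of_nonneg hsubE' (fun e _ _ => lift_dist_nonneg e)
  have hmin := hmst_min E' hsub' hconn' hacyc'
  linarith
end

section
/- In the lower-bound instance of the previous context, the minimum spanning tree of the predicted terminal set T̂ = {v₁, v_k, v_{k+1}, …, v_{2k−2}} in the metric completion of the graph consists of the k−1 cycle edges (v₁, v_{2k−2}), (v_{2k−2}, v_{2k−3}), …, (v_{k+1}, v_k), and has total cost k−1. -/
/-- Edge costs in the lower-bound instance on vertices `0, 1, …, 2k-3` (vertex `i` represents
`v_{i+1}`). -/
noncomputable def ecost (k : ℕ) (a b : ℕ) : ℝ :=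
  if min a b = 0 ∧ 1 ≤ max a b ∧ max a b ≤ k - 2 then 1 / ((k : ℝ) - 2) ^ 2
  else if min a b = 0 ∧ max a b = k - 1 then 1 + 1 / ((k : ℝ) - 2) ^ 2
  else 1

theorem ecost_comm (k : ℕ) : ∀ a b : ℕ, ecost k a b = ecost k b a := by
  intro a b
  unfold ecost
  rw [min_comm, max_comm]

noncomputable def ecostS (k : ℕ) : Sym2 ℕ → ℝ := Sym2.lift ⟨ecost k, ecost_comm k⟩

/-- Edges of the lower-bound instance. -/
def edgesLB (k : ℕ) : Finset (Sym2 ℕ) :=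
  ((Finset.Icc 1 (k - 1)).image fun i => s(0, i)) ∪
    ((Finset.Icc (k - 1) (2 * k - 4)).image fun j => s(j, j + 1)) ∪ {s(2 * k - 3, 0)}

/-- Shortest-path distance (in the metric completion) between the endpoints of an unordered
pair, as the infimum of walk costs in the lower-bound graph. -/
noncomputable def spdS (k : ℕ) (e : Sym2 ℕ) : ℝ :=
  sInf {x : ℝ | ∃ u v : ℕ, e = s(u, v) ∧
    ∃ p : (SimpleGraph.fromEdgeSet (↑(edgesLB k) : Set (Sym2 ℕ))).Walk u v,
      x = (p.edges.map (ecostS k)).sum}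

/-- The `k-1` cycle edges `(v₁, v_{2k-2}), (v_{2k-2}, v_{2k-3}), …, (v_{k+1}, v_k)`. -/
def cycleLB (k : ℕ) : Finset (Sym2 ℕ) :=
  insert s(2 * k - 3, 0) ((Finset.Icc (k - 1) (2 * k - 4)).image fun j => s(j, j + 1))

/-- The predicted terminal set `T̂ = {v₁, v_k, v_{k+1}, …, v_{2k-2}}`. -/
def ThatLB (k : ℕ) : Finset ℕ := insert 0 (Finset.Icc (k - 1) (2 * k - 3))

open SimpleGraph Finset

-- basic helpers
def posL (k x : ℕ) : ℕ := if x ≤ k - 2 then 0 else x - (k - 2)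

def cdist (k a b : ℕ) : ℕ := min (max a b - min a b) (k - (max a b - min a b))

lemma cdist_self (k c : ℕ) : cdist k c c = 0 := by unfold cdist; omega

lemma cdist_tri' {k c p q : ℕ} (hc : c ≤ k) (hp : p ≤ k) (hq : q ≤ k) :
    cdist k c p ≤ cdist k c q + cdist k p q := by
  unfold cdist; omega

lemma abs_cdist_le {k : ℕ} {c p q : ℕ} (d : ℕ) (hc : c ≤ k) (hp : p ≤ k) (hq : q ≤ k)
    (hd : cdist k p q ≤ d) :
    |(cdist k c p : ℝ) - (cdist k c q : ℝ)| ≤ (d : ℝ) := by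
  have hs : cdist k q p = cdist k p q := by unfold cdist; omega
  have h1 : cdist k c p ≤ d + cdist k c q := by
    have := cdist_tri' hc hp hq; omega
  have h2 : cdist k c q ≤ d + cdist k c p := by
    have := cdist_tri' hc hq hp; omega
  rw [abs_sub_le_iff]
  constructor
  · rw [sub_le_iff_le_add]; exact_mod_cast h1
  · rw [sub_le_iff_le_add]; exact_mod_cast h2

lemma mem_ThatLB {k x : ℕ} : x ∈ ThatLB k ↔ x = 0 ∨ (k - 1 ≤ x ∧ x ≤ 2 * k - 3) := by
  simp [ThatLB, Finset.mem_insert, Finset.mem_Icc]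

lemma mem_cycleLB {k : ℕ} {e : Sym2 ℕ} :
    e ∈ cycleLB k ↔ e = s(2 * k - 3, 0) ∨ ∃ j, k - 1 ≤ j ∧ j ≤ 2 * k - 4 ∧ e = s(j, j + 1) := by
  simp only [cycleLB, Finset.mem_insert, Finset.mem_image, Finset.mem_Icc]
  constructor
  · rintro (h | ⟨j, ⟨h1, h2⟩, h3⟩)
    · exact Or.inl h
    · exact Or.inr ⟨j, h1, h2, h3.symm⟩
  · rintro (h | ⟨j, h1, h2, h3⟩)
    · exact Or.inl h
    · exact Or.inr ⟨j, ⟨h1, h2⟩, h3.symm⟩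

lemma mem_edgesLB {k : ℕ} {e : Sym2 ℕ} :
    e ∈ edgesLB k ↔ (∃ i, 1 ≤ i ∧ i ≤ k - 1 ∧ e = s(0, i)) ∨
      (∃ j, k - 1 ≤ j ∧ j ≤ 2 * k - 4 ∧ e = s(j, j + 1)) ∨ e = s(2 * k - 3, 0) := by
  simp only [edgesLB, Finset.mem_union, Finset.mem_image, Finset.mem_Icc, Finset.mem_singleton]
  constructor
  · rintro ((⟨i, ⟨h1, h2⟩, h3⟩ | ⟨j, ⟨h1, h2⟩, h3⟩) | h)
    · exact Or.inl ⟨i, h1, h2, h3.symm⟩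
    · exact Or.inr (Or.inl ⟨j, h1, h2, h3.symm⟩)
    · exact Or.inr (Or.inr h)
  · rintro (⟨i, h1, h2, h3⟩ | ⟨j, h1, h2, h3⟩ | h)
    · exact Or.inl (Or.inl ⟨i, ⟨h1, h2⟩, h3.symm⟩)
    · exact Or.inl (Or.inr ⟨j, ⟨h1, h2⟩, h3.symm⟩)
    · exact Or.inr h

lemma cycle_subset (k : ℕ) : cycleLB k ⊆ edgesLB k := by
  intro e he
  rcases mem_cycleLB.mp he with h | ⟨j, h1, h2, h3⟩
  · exact mem_edgesLB.mpr (Or.inr (Or.inr h))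
  · exact mem_edgesLB.mpr (Or.inr (Or.inl ⟨j, h1, h2, h3⟩))

-- ecost evaluations
lemma ecost_nonneg (k a b : ℕ) : 0 ≤ ecost k a b := by
  unfold ecost; split_ifs <;> positivity

lemma ecostS_mk (k a b : ℕ) : ecostS k s(a, b) = ecost k a b := rfl

lemma ecostS_nonneg (k : ℕ) (e : Sym2 ℕ) : 0 ≤ ecostS k e := by
  induction e using Sym2.ind with
  | _ a b => rw [ecostS_mk]; exact ecost_nonneg k a b

lemma ecost_small {k i : ℕ} (h1 : 1 ≤ i) (h2 : i ≤ k - 2) :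
    ecost k 0 i = 1 / ((k : ℝ) - 2) ^ 2 := by
  unfold ecost; rw [if_pos (by omega)]

lemma ecost_chord {k : ℕ} (hk : 4 ≤ k) : ecost k 0 (k - 1) = 1 + 1 / ((k : ℝ) - 2) ^ 2 := by
  unfold ecost; rw [if_neg (by omega), if_pos (by omega)]

lemma ecost_step {k j : ℕ} (hk : 4 ≤ k) (hj : k - 1 ≤ j) : ecost k j (j + 1) = 1 := by
  unfold ecost; rw [if_neg (by omega), if_neg (by omega)]

lemma ecost_last {k : ℕ} (hk : 4 ≤ k) : ecost k (2 * k - 3) 0 = 1 := by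
  unfold ecost; rw [if_neg (by omega), if_neg (by omega)]

lemma posL_le {k x : ℕ} (hx : x ≤ 2 * k - 3) : posL k x ≤ k := by
  unfold posL; split_ifs <;> omega

lemma edge_endpoints_le {k : ℕ} (hk : 4 ≤ k) {a b : ℕ} (he : s(a, b) ∈ edgesLB k) :
    a ≤ 2 * k - 3 ∧ b ≤ 2 * k - 3 := by
  rcases mem_edgesLB.mp he with ⟨i, h1, h2, h3⟩ | ⟨j, h1, h2, h3⟩ | h3 <;>
    rcases Sym2.eq_iff.mp h3 with ⟨ha, hb⟩ | ⟨ha, hb⟩ <;> omega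

lemma edge_lip {k : ℕ} (hk : 4 ≤ k) {c : ℕ} (hc : c ≤ k) {a b : ℕ}
    (he : s(a, b) ∈ edgesLB k) :
    |(cdist k c (posL k a) : ℝ) - (cdist k c (posL k b) : ℝ)| ≤ ecost k a b := by
  have hsq : (0 : ℝ) ≤ 1 / ((k : ℝ) - 2) ^ 2 := by positivity
  have hp0 : posL k 0 = 0 := by unfold posL; rw [if_pos (by omega)]
  have core1 : ∀ i, 1 ≤ i → i ≤ k - 1 →
      |(cdist k c (posL k 0) : ℝ) - (cdist k c (posL k i) : ℝ)| ≤ ecost k 0 i := by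
    intro i h1 h2
    by_cases hik : i ≤ k - 2
    · have hpi : posL k i = 0 := by unfold posL; rw [if_pos hik]
      rw [hp0, hpi, sub_self, abs_zero, ecost_small h1 hik]
      exact hsq
    · have hi : i = k - 1 := by omega
      subst hi
      have hpi : posL k (k - 1) = 1 := by unfold posL; rw [if_neg (by omega)]; omega
      rw [hp0, hpi, ecost_chord hk]
      have h := abs_cdist_le 1 hc (by omega) (by omega) (show cdist k 0 1 ≤ 1 by unfold cdist; omega)
      calc |(cdist k c 0 : ℝ) - (cdist k c 1 : ℝ)| ≤ (1 : ℝ) := by simpa using h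
        _ ≤ 1 + 1 / ((k : ℝ) - 2) ^ 2 := by linarith
  have core2 : ∀ j, k - 1 ≤ j → j ≤ 2 * k - 4 →
      |(cdist k c (posL k j) : ℝ) - (cdist k c (posL k (j + 1)) : ℝ)| ≤ ecost k j (j + 1) := by
    intro j h1 h2
    have hpj : posL k j = j - (k - 2) := by unfold posL; rw [if_neg (by omega)]
    have hpj1 : posL k (j + 1) = j - (k - 2) + 1 := by unfold posL; rw [if_neg (by omega)]; omega
    rw [hpj, hpj1, ecost_step hk h1]
    have h := abs_cdist_le 1 hc (by omega) (by omega)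
      (show cdist k (j - (k - 2)) (j - (k - 2) + 1) ≤ 1 by unfold cdist; omega)
    simpa using h
  have core3 : |(cdist k c (posL k (2 * k - 3)) : ℝ) - (cdist k c (posL k 0) : ℝ)| ≤
      ecost k (2 * k - 3) 0 := by
    have hpj : posL k (2 * k - 3) = k - 1 := by unfold posL; rw [if_neg (by omega)]; omega
    rw [hpj, hp0, ecost_last hk]
    have h := abs_cdist_le 1 hc (by omega) (by omega)
      (show cdist k (k - 1) 0 ≤ 1 by unfold cdist; omega)
    simpa using h
  rcases mem_edgesLB.mp he with ⟨i, h1, h2, h3⟩ | ⟨j, h1, h2, h3⟩ | h3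
  · rcases Sym2.eq_iff.mp h3 with ⟨ha, hb⟩ | ⟨ha, hb⟩
    · subst ha; subst hb; exact core1 _ h1 h2
    · subst ha; subst hb; rw [abs_sub_comm, ecost_comm]; exact core1 _ h1 h2
  · rcases Sym2.eq_iff.mp h3 with ⟨ha, hb⟩ | ⟨ha, hb⟩
    · subst ha; subst hb; exact core2 _ h1 h2
    · subst hb; subst ha; rw [abs_sub_comm, ecost_comm]; exact core2 _ h1 h2
  · rcases Sym2.eq_iff.mp h3 with ⟨ha, hb⟩ | ⟨ha, hb⟩
    · subst ha; subst hb; exact core3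
    · subst ha; subst hb; rw [abs_sub_comm, ecost_comm]; exact core3

lemma walk_cost_lb {k : ℕ} (hk : 4 ≤ k) {c : ℕ} (hc : c ≤ k) {u v : ℕ}
    (hv : posL k v ≤ k)
    (p : (SimpleGraph.fromEdgeSet (↑(edgesLB k) : Set (Sym2 ℕ))).Walk u v) :
    |(cdist k c (posL k u) : ℝ) - (cdist k c (posL k v) : ℝ)| ≤
      (p.edges.map (ecostS k)).sum := by
  induction p with
  | nil => simp
  | @cons u w v h p ih =>
    have hmem : s(u, w) ∈ edgesLB k := by
      have := ((SimpleGraph.fromEdgeSet_adj _).mp h).1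
      exact Finset.mem_coe.mp this
    rw [SimpleGraph.Walk.edges_cons, List.map_cons, List.sum_cons, ecostS_mk]
    calc |(cdist k c (posL k u) : ℝ) - (cdist k c (posL k v) : ℝ)|
        ≤ |(cdist k c (posL k u) : ℝ) - (cdist k c (posL k w) : ℝ)| +
          |(cdist k c (posL k w) : ℝ) - (cdist k c (posL k v) : ℝ)| := abs_sub_le _ _ _
      _ ≤ ecost k u w + (p.edges.map (ecostS k)).sum := add_le_add (edge_lip hk hc hmem) (ih hv)

lemma spdS_def (k : ℕ) (e : Sym2 ℕ) : spdS k e = sInf {x : ℝ | ∃ u v : ℕ, e = s(u, v) ∧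
    ∃ p : (SimpleGraph.fromEdgeSet (↑(edgesLB k) : Set (Sym2 ℕ))).Walk u v,
      x = (p.edges.map (ecostS k)).sum} := rfl

lemma walk_cost_nonneg (k : ℕ) {u v : ℕ}
    (p : (SimpleGraph.fromEdgeSet (↑(edgesLB k) : Set (Sym2 ℕ))).Walk u v) :
    0 ≤ (p.edges.map (ecostS k)).sum := by
  apply List.sum_nonneg
  intro x hx
  obtain ⟨e, _, rfl⟩ := List.mem_map.mp hx
  exact ecostS_nonneg k e

lemma spdS_bdd (k : ℕ) (e : Sym2 ℕ) : BddBelow {x : ℝ | ∃ u v : ℕ, e = s(u, v) ∧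
    ∃ p : (SimpleGraph.fromEdgeSet (↑(edgesLB k) : Set (Sym2 ℕ))).Walk u v,
      x = (p.edges.map (ecostS k)).sum} := by
  refine ⟨0, ?_⟩
  rintro x ⟨u, v, _, p, rfl⟩
  exact walk_cost_nonneg k p

lemma spdS_nonneg (k : ℕ) (e : Sym2 ℕ) : 0 ≤ spdS k e := by
  rw [spdS_def]
  apply Real.sInf_nonneg
  rintro x ⟨u, v, _, p, rfl⟩
  exact walk_cost_nonneg k p

lemma reach0 {k : ℕ} (hk : 4 ≤ k) {u : ℕ} (hu : u ∈ ThatLB k) :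
    (SimpleGraph.fromEdgeSet (↑(cycleLB k) : Set (Sym2 ℕ))).Reachable 0 u := by
  rcases mem_ThatLB.mp hu with rfl | ⟨h1, h2⟩
  · exact SimpleGraph.Reachable.refl 0
  · have main : ∀ d : ℕ, k - 1 ≤ 2 * k - 3 - d →
        (SimpleGraph.fromEdgeSet (↑(cycleLB k) : Set (Sym2 ℕ))).Reachable 0 (2 * k - 3 - d) := by
      intro d
      induction d with
      | zero =>
        intro _
        have hadj : (SimpleGraph.fromEdgeSet (↑(cycleLB k) : Set (Sym2 ℕ))).Adj 0 (2 * k - 3) := by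
          rw [SimpleGraph.fromEdgeSet_adj]
          refine ⟨Finset.mem_coe.mpr (mem_cycleLB.mpr (Or.inl ?_)), by omega⟩
          rw [Sym2.eq_swap]
        simpa using hadj.reachable
      | succ d ih =>
        intro hd
        have hd' : k - 1 ≤ 2 * k - 3 - d := by omega
        have hadj : (SimpleGraph.fromEdgeSet (↑(cycleLB k) : Set (Sym2 ℕ))).Adj
            (2 * k - 3 - d) (2 * k - 3 - (d + 1)) := by
          rw [SimpleGraph.fromEdgeSet_adj]
          refine ⟨Finset.mem_coe.mpr (mem_cycleLB.mpr (Or.inr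
            ⟨2 * k - 3 - (d + 1), by omega, by omega, ?_⟩)), by omega⟩
          have hj : 2 * k - 3 - (d + 1) + 1 = 2 * k - 3 - d := by omega
          rw [hj, Sym2.eq_swap]
        exact (ih hd').trans hadj.reachable
    have h := main (2 * k - 3 - u) (by omega)
    rwa [show 2 * k - 3 - (2 * k - 3 - u) = u from by omega] at h

lemma cdist_pos_ge {k x y : ℕ} (hk : 4 ≤ k) (hx : x ∈ ThatLB k) (hy : y ∈ ThatLB k)
    (hxy : x ≠ y) : 1 ≤ cdist k (posL k x) (posL k y) := by
  rw [mem_ThatLB] at hx hy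
  unfold cdist posL
  split_ifs <;> omega

lemma posL_ThatLB_le {k x : ℕ} (hk : 4 ≤ k) (hx : x ∈ ThatLB k) : posL k x ≤ k := by
  rw [mem_ThatLB] at hx; unfold posL; split_ifs <;> omega

lemma spdS_ge_one {k u v : ℕ} (hk : 4 ≤ k) (hu : u ∈ ThatLB k) (hv : v ∈ ThatLB k)
    (huv : u ≠ v) : 1 ≤ spdS k s(u, v) := by
  have hreach : (SimpleGraph.fromEdgeSet (↑(edgesLB k) : Set (Sym2 ℕ))).Reachable u v := by
    refine SimpleGraph.Reachable.mono (SimpleGraph.fromEdgeSet_mono ?_)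
      (((reach0 hk hu).symm.trans (reach0 hk hv)))
    exact Finset.coe_subset.mpr (cycle_subset k)
  obtain ⟨p0⟩ := hreach
  rw [spdS_def]
  refine le_csInf ⟨(p0.edges.map (ecostS k)).sum, ?_⟩ ?_
  · exact ⟨u, v, rfl, p0, rfl⟩
  rintro x ⟨u', v', heq, p, rfl⟩
  have key : ∀ (w z : ℕ), w ∈ ThatLB k → z ∈ ThatLB k → w ≠ z →
      ∀ (q : (SimpleGraph.fromEdgeSet (↑(edgesLB k) : Set (Sym2 ℕ))).Walk w z),
      1 ≤ (q.edges.map (ecostS k)).sum := by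
    intro w z hw hz hwz q
    have h := walk_cost_lb hk (posL_ThatLB_le hk hw) (posL_ThatLB_le hk hz) q
    rw [cdist_self] at h
    push_cast at h
    rw [zero_sub, abs_neg, abs_of_nonneg (by positivity)] at h
    have h1 : (1 : ℝ) ≤ (cdist k (posL k w) (posL k z) : ℝ) := by
      exact_mod_cast cdist_pos_ge hk hw hz hwz
    linarith
  rcases Sym2.eq_iff.mp heq with ⟨ha, hb⟩ | ⟨ha, hb⟩
  · subst ha; subst hb; exact key _ _ hu hv huv p
  · subst ha; subst hb; exact key _ _ hv hu (Ne.symm huv) p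

lemma spdS_edge_eq_one {k a b : ℕ} (hk : 4 ≤ k) (ha : a ∈ ThatLB k) (hb : b ∈ ThatLB k)
    (hab : a ≠ b) (hmem : s(a, b) ∈ edgesLB k) (hc : ecost k a b = 1) :
    spdS k s(a, b) = 1 := by
  refine le_antisymm ?_ (spdS_ge_one hk ha hb hab)
  rw [spdS_def]
  apply csInf_le (spdS_bdd k _)
  refine ⟨a, b, rfl, SimpleGraph.Walk.cons
    ((SimpleGraph.fromEdgeSet_adj _).mpr ⟨Finset.mem_coe.mpr hmem, hab⟩) SimpleGraph.Walk.nil, ?_⟩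
  simp [ecostS_mk, hc]

lemma reach_invariant {V : Type*} {G : SimpleGraph V} (P : V → Prop)
    (h : ∀ x y, G.Adj x y → (P x ↔ P y)) {u v : V} (hr : G.Reachable u v) : P u ↔ P v := by
  obtain ⟨p⟩ := hr
  induction p with
  | nil => exact Iff.rfl
  | cons ha _ ih => exact (h _ _ ha).trans ih

def edgeOfL (k t : ℕ) : Sym2 ℕ := if t = 2 * k - 3 then s(2 * k - 3, 0) else s(t, t + 1)

def fL (k x : ℕ) : ℕ := if x = 0 then 2 * k - 2 else x

lemma mem_cycleLB_edgeOf {k : ℕ} (hk : 4 ≤ k) {e : Sym2 ℕ} :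
    e ∈ cycleLB k ↔ ∃ t, k - 1 ≤ t ∧ t ≤ 2 * k - 3 ∧ e = edgeOfL k t := by
  rw [mem_cycleLB]
  constructor
  · rintro (rfl | ⟨j, h1, h2, rfl⟩)
    · exact ⟨2 * k - 3, by omega, le_rfl, by rw [edgeOfL, if_pos rfl]⟩
    · exact ⟨j, h1, by omega, by rw [edgeOfL, if_neg (by omega)]⟩
  · rintro ⟨t, h1, h2, rfl⟩
    by_cases h : t = 2 * k - 3
    · subst h; rw [edgeOfL, if_pos rfl]; exact Or.inl rfl
    · rw [edgeOfL, if_neg h]; exact Or.inr ⟨t, h1, by omega, rfl⟩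

lemma edgeOfL_fvals {k : ℕ} (hk : 4 ≤ k) {t x y : ℕ} (h1 : k - 1 ≤ t) (h2 : t ≤ 2 * k - 3)
    (he : s(x, y) = edgeOfL k t) :
    (fL k x = t ∧ fL k y = t + 1) ∨ (fL k x = t + 1 ∧ fL k y = t) := by
  have f0 : fL k 0 = 2 * k - 2 := by unfold fL; rw [if_pos rfl]
  have fx : ∀ z : ℕ, z ≠ 0 → fL k z = z := by intro z hz; unfold fL; rw [if_neg hz]
  unfold edgeOfL at he
  split_ifs at he with h
  · rcases Sym2.eq_iff.mp he with ⟨hx, hy⟩ | ⟨hx, hy⟩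
    · subst hx; subst hy
      refine Or.inl ⟨?_, ?_⟩
      · rw [fx _ (by omega)]; omega
      · rw [f0]; omega
    · subst hx; subst hy
      refine Or.inr ⟨?_, ?_⟩
      · rw [f0]; omega
      · rw [fx _ (by omega)]; omega
  · rcases Sym2.eq_iff.mp he with ⟨hx, hy⟩ | ⟨hx, hy⟩
    · subst hx; subst hy
      refine Or.inl ⟨?_, ?_⟩
      · rw [fx _ (by omega)]
      · rw [fx _ (by omega)]
    · subst hx; subst hy
      refine Or.inr ⟨?_, ?_⟩
      · rw [fx _ (by omega)]
      · rw [fx _ (by omega)]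

lemma edgeOfL_inj {k : ℕ} (hk : 4 ≤ k) {t t' : ℕ} (h1 : k - 1 ≤ t) (h2 : t ≤ 2 * k - 3)
    (h1' : k - 1 ≤ t') (h2' : t' ≤ 2 * k - 3) (heq : edgeOfL k t = edgeOfL k t') : t = t' := by
  unfold edgeOfL at heq
  split_ifs at heq with ha hb hb <;> rcases Sym2.eq_iff.mp heq with ⟨hx, hy⟩ | ⟨hx, hy⟩ <;> omega

lemma cycle_acyclic {k : ℕ} (hk : 4 ≤ k) :
    (SimpleGraph.fromEdgeSet (↑(cycleLB k) : Set (Sym2 ℕ))).IsAcyclic := by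
  rw [SimpleGraph.isAcyclic_iff_forall_adj_isBridge]
  intro v w hadj
  obtain ⟨hmem, hne⟩ := (SimpleGraph.fromEdgeSet_adj _).mp hadj
  obtain ⟨t, ht1, ht2, hvw⟩ := (mem_cycleLB_edgeOf hk).mp (Finset.mem_coe.mp hmem)
  rw [SimpleGraph.isBridge_iff]
  intro hr
  have inv : ∀ x y, ((SimpleGraph.fromEdgeSet (↑(cycleLB k) : Set (Sym2 ℕ))) \
      SimpleGraph.fromEdgeSet {s(v, w)}).Adj x y → (fL k x ≤ t ↔ fL k y ≤ t) := by
    intro x y hxy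
    rw [SimpleGraph.sdiff_adj] at hxy
    obtain ⟨hG, hnot⟩ := hxy
    obtain ⟨hmem', hne'⟩ := (SimpleGraph.fromEdgeSet_adj _).mp hG
    obtain ⟨t', ht1', ht2', hxy'⟩ := (mem_cycleLB_edgeOf hk).mp (Finset.mem_coe.mp hmem')
    have htt : t' ≠ t := by
      intro h
      subst h
      exact hnot ((SimpleGraph.fromEdgeSet_adj _).mpr
        ⟨by rw [Set.mem_singleton_iff, hxy', hvw], hne'⟩)
    rcases edgeOfL_fvals hk ht1' ht2' hxy' with ⟨ha, hb⟩ | ⟨ha, hb⟩ <;> omega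
  have hfv := edgeOfL_fvals hk ht1 ht2 hvw
  have := reach_invariant _ inv hr
  omega

lemma ThatLB_card {k : ℕ} (hk : 4 ≤ k) : (ThatLB k).card = k := by
  rw [ThatLB, Finset.card_insert_of_notMem (by rw [Finset.mem_Icc]; omega), Nat.card_Icc]
  omega

lemma cycleLB_card {k : ℕ} (hk : 4 ≤ k) : (cycleLB k).card = k - 1 := by
  rw [cycleLB, Finset.card_insert_of_notMem, Finset.card_image_of_injOn, Nat.card_Icc]
  · omega
  · intro a _ b _ hab
    rcases Sym2.eq_iff.mp hab with ⟨h1, h2⟩ | ⟨h1, h2⟩ <;> omega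
  · intro hmem
    obtain ⟨j, hj, hj2⟩ := Finset.mem_image.mp hmem
    rw [Finset.mem_Icc] at hj
    rcases Sym2.eq_iff.mp hj2 with ⟨h1, h2⟩ | ⟨h1, h2⟩ <;> omega

lemma spdS_cycle_edge {k : ℕ} (hk : 4 ≤ k) {e : Sym2 ℕ} (he : e ∈ cycleLB k) :
    spdS k e = 1 := by
  rcases mem_cycleLB.mp he with rfl | ⟨j, h1, h2, rfl⟩
  · exact spdS_edge_eq_one hk (mem_ThatLB.mpr (Or.inr ⟨by omega, by omega⟩))
      (mem_ThatLB.mpr (Or.inl rfl)) (by omega)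
      (mem_edgesLB.mpr (Or.inr (Or.inr rfl))) (ecost_last hk)
  · exact spdS_edge_eq_one hk (mem_ThatLB.mpr (Or.inr ⟨by omega, by omega⟩))
      (mem_ThatLB.mpr (Or.inr ⟨by omega, by omega⟩)) (by omega)
      (mem_edgesLB.mpr (Or.inr (Or.inl ⟨j, h1, h2, rfl⟩))) (ecost_step hk h1)

lemma sum_cycle_spdS {k : ℕ} (hk : 4 ≤ k) :
    ∑ e ∈ cycleLB k, spdS k e = (k : ℝ) - 1 := by
  rw [Finset.sum_congr rfl fun e he => spdS_cycle_edge hk he, Finset.sum_const,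
    cycleLB_card hk, nsmul_eq_mul, mul_one]
  have : (1 : ℕ) ≤ k := by omega
  push_cast [Nat.cast_sub this]
  ring


/-- The minimum spanning tree of `T̂` in the metric completion of the lower-bound graph consists
of the `k-1` cycle edges and has total cost `k-1`: the cycle edges form a spanning tree of `T̂`
of cost `k-1` which is of minimum cost among all spanning trees of `T̂`. -/
theorem lower_bound_instance_mst (k : ℕ) (hk : 4 ≤ k) :
    (∀ e ∈ cycleLB k, ∀ x ∈ e, x ∈ ThatLB k) ∧
    (∀ u ∈ ThatLB k, ∀ v ∈ ThatLB k,
      (SimpleGraph.fromEdgeSet (↑(cycleLB k) : Set (Sym2 ℕ))).Reachable u v) ∧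
    (SimpleGraph.fromEdgeSet (↑(cycleLB k) : Set (Sym2 ℕ))).IsAcyclic ∧
    (cycleLB k).card = k - 1 ∧
    ∑ e ∈ cycleLB k, spdS k e = (k : ℝ) - 1 ∧
    ∀ F : Finset (Sym2 ℕ), (∀ e ∈ F, ∀ x ∈ e, x ∈ ThatLB k) →
      (∀ u ∈ ThatLB k, ∀ v ∈ ThatLB k,
        (SimpleGraph.fromEdgeSet (↑F : Set (Sym2 ℕ))).Reachable u v) →
      (SimpleGraph.fromEdgeSet (↑F : Set (Sym2 ℕ))).IsAcyclic →
      ∑ e ∈ cycleLB k, spdS k e ≤ ∑ e ∈ F, spdS k e := by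
  refine ⟨?_, ?_, cycle_acyclic hk, cycleLB_card hk, sum_cycle_spdS hk, ?_⟩
  · intro e he x hx
    rcases mem_cycleLB.mp he with rfl | ⟨j, h1, h2, rfl⟩ <;>
      rcases Sym2.mem_iff.mp hx with rfl | rfl <;>
      exact mem_ThatLB.mpr (by omega)
  · intro u hu v hv
    exact (reach0 hk hu).symm.trans (reach0 hk hv)
  · intro F hsub hconn hacyc
    classical
    set G := SimpleGraph.fromEdgeSet (↑F : Set (Sym2 ℕ)) with hG
    let G' : SimpleGraph {x // x ∈ ThatLB k} := G.comap Subtype.val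
    have hkey : ∀ (u v : ℕ) (p : G.Walk u v) (hu : u ∈ ThatLB k) (hv : v ∈ ThatLB k),
        G'.Reachable ⟨u, hu⟩ ⟨v, hv⟩ := by
      intro u v p
      induction p with
      | nil => intro hu hv; exact SimpleGraph.Reachable.refl _
      | @cons u w v h p ih =>
        intro hu hv
        have hmem : s(u, w) ∈ F := Finset.mem_coe.mp ((SimpleGraph.fromEdgeSet_adj _).mp h).1
        have hw : w ∈ ThatLB k := hsub _ hmem w (Sym2.mem_mk_right u w)
        have hadj : G'.Adj ⟨u, hu⟩ ⟨w, hw⟩ := h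
        exact hadj.reachable.trans (ih hw hv)
    have hconn' : G'.Connected := by
      haveI : Nonempty {x // x ∈ ThatLB k} := ⟨⟨0, mem_ThatLB.mpr (Or.inl rfl)⟩⟩
      refine ⟨?_⟩
      rintro ⟨u, hu⟩ ⟨v, hv⟩
      obtain ⟨p⟩ := hconn u hu v hv
      exact hkey u v p hu hv
    have hacy' : G'.IsAcyclic := by
      intro v c hc
      have hinj : Function.Injective
          ⇑(SimpleGraph.Hom.comap (Subtype.val : {x // x ∈ ThatLB k} → ℕ) G) :=
        Subtype.val_injective
      exact hacyc (c.map (SimpleGraph.Hom.comap Subtype.val G))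
        ((SimpleGraph.Walk.map_isCycle_iff_of_injective hinj).mpr hc)
    have htree : G'.IsTree := ⟨hconn', hacy'⟩
    haveI : Fintype G'.edgeSet := Fintype.ofFinite _
    have hcard := htree.card_edgeFinset
    rw [Fintype.card_coe, ThatLB_card hk] at hcard
    set E : Finset (Sym2 ℕ) := G'.edgeFinset.image (Sym2.map Subtype.val) with hE
    have hEcard : E.card = k - 1 := by
      rw [hE, Finset.card_image_of_injective _ (Sym2.map.injective Subtype.val_injective)]
      omega
    have hEprop : ∀ e ∈ E, e ∈ F ∧ 1 ≤ spdS k e := by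
      intro e he
      obtain ⟨e', he', rfl⟩ := Finset.mem_image.mp he
      rw [SimpleGraph.mem_edgeFinset] at he'
      induction e' using Sym2.ind with
      | _ a b =>
        rw [SimpleGraph.mem_edgeSet] at he'
        have hadj : G.Adj a.1 b.1 := he'
        obtain ⟨hm, hne⟩ := (SimpleGraph.fromEdgeSet_adj _).mp hadj
        rw [Sym2.map_pair_eq]
        exact ⟨Finset.mem_coe.mp hm, spdS_ge_one hk a.2 b.2 hne⟩
    have hsum1 : ((k : ℝ) - 1) ≤ ∑ e ∈ E, spdS k e := by
      have h := Finset.card_nsmul_le_sum E (spdS k) 1 fun e he => (hEprop e he).2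
      rw [hEcard, nsmul_eq_mul, mul_one] at h
      refine le_trans (le_of_eq ?_) h
      have : (1 : ℕ) ≤ k := by omega
      push_cast [Nat.cast_sub this]
      ring
    have hsum2 : ∑ e ∈ E, spdS k e ≤ ∑ e ∈ F, spdS k e := by
      refine Finset.sum_le_sum_of_subset_of_nonneg (fun e he => (hEprop e he).1)
        fun e _ _ => spdS_nonneg k e
    rw [sum_cycle_spdS hk]
    linarith
end
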